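/- For each integer k ≥ 2, let π(k) be the PageRank vector of Γ(k) for α = 1 − 1/k, and let σ(k) be the PageRank vector of Γ(k) for α = 1 (the vector with σ(k)_A = 1 and all other entries 0). Then the supremum norm ‖σ(k) − π(k)‖_∞ converges to 1 as k → ∞. -/
import Mathlib


/-- Arc relation of the graph `Γ(k)` on vertex indices `0, ..., k+2`, where
vertex `0` is `C1`, vertex `1` is `C2`, vertex `i+1` is `B_i` for `1 ≤ i ≤ k`,
and vertex `k+2` is `A`.  `PRadj k j i` holds iff there is an arc from `j` to `i`. -/
def PRadj (k j i : ℕ) : Prop :=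
  (j = 0 ∧ (i = 0 ∨ i = 1)) ∨
  (j = 1 ∧ (i = 0 ∨ i = 1 ∨ i = 2)) ∨
  (2 ≤ j ∧ j ≤ k + 1 ∧ (i = 0 ∨ i = 1 ∨ i = j + 1)) ∨
  (j = k + 2 ∧ i = k + 2)

instance (k j i : ℕ) : Decidable (PRadj k j i) := by unfold PRadj; infer_instance

/-- Out-degree of vertex `j` in `Γ(k)`:  `deg(C1) = 2`, `deg(A) = 1`, all others `3`. -/
def PRdeg (k j : ℕ) : ℕ := if j = 0 then 2 else if j = k + 2 then 1 else 3

/-- The PageRank matrix `R_α` of `Γ(k)`:  entry `(i, j)` is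
`α / deg(j) + (1 - α)/(k+3)` if there is an arc from `j` to `i`, and `(1 - α)/(k+3)`
otherwise. -/
noncomputable def PRmat (k : ℕ) (α : ℝ) : Matrix (Fin (k + 3)) (Fin (k + 3)) ℝ :=
  fun i j =>
    if PRadj k j.1 i.1 then α / (PRdeg k j.1 : ℝ) + (1 - α) / ((k : ℝ) + 3)
    else (1 - α) / ((k : ℝ) + 3)

/-- `π` is a PageRank vector of `Γ(k)` for jumping parameter `α`:  it has nonnegative
entries summing to `1` and satisfies `R_α π = π`. -/
def IsPageRank (k : ℕ) (α : ℝ) (π : Fin (k + 3) → ℝ) : Prop :=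
  (∀ v, 0 ≤ π v) ∧ (∑ v, π v = 1) ∧ (PRmat k α).mulVec π = π


lemma PRrow (k : ℕ) (α : ℝ) (π : Fin (k+3) → ℝ)
    (h : (PRmat k α).mulVec π = π) (hs : ∑ v, π v = 1) (i : Fin (k+3)) :
    π i = (1-α)/((k:ℝ)+3)
      + ∑ j, (if PRadj k j.1 i.1 then α/(PRdeg k j.1 : ℝ) else 0) * π j := by
  conv_lhs => rw [← h]
  simp only [Matrix.mulVec, dotProduct, PRmat]
  rw [Finset.sum_congr rfl (fun j _ => show _ = (if PRadj k j.1 i.1 then α/(PRdeg k j.1 : ℝ) else 0) * π j + (1-α)/((k:ℝ)+3) * π j by split_ifs <;> ring),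
    Finset.sum_add_distrib, ← Finset.mul_sum, hs, mul_one, add_comm]

lemma Brec (k : ℕ) (α : ℝ) (π : Fin (k+3) → ℝ)
    (h : (PRmat k α).mulVec π = π) (hs : ∑ v, π v = 1)
    (m : ℕ) (h2 : 2 ≤ m) (hm : m ≤ k+1) :
    π ⟨m, by omega⟩ = (1-α)/((k:ℝ)+3) + (α/3) * π ⟨m-1, by omega⟩ := by
  rw [PRrow k α π h hs ⟨m, by omega⟩]
  congr 1
  rw [Finset.sum_eq_single (⟨m-1, by omega⟩ : Fin (k+3))]
  · have hadj : PRadj k (m-1) m := by unfold PRadj; omega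
    have hdeg : PRdeg k (m-1) = 3 := by
      unfold PRdeg; rw [if_neg (by omega), if_neg (by omega)]
    show (if PRadj k (m-1) m then α/(PRdeg k (m-1) : ℝ) else 0) * _ = _
    rw [if_pos hadj, hdeg]; norm_num
  · intro j _ hj
    have hlt := j.isLt
    have hne : j.1 ≠ m - 1 := fun hh => hj (Fin.ext hh)
    have : ¬ PRadj k j.1 m := by unfold PRadj; omega
    rw [if_neg this, zero_mul]
  · intro hmem; exact absurd (Finset.mem_univ _) hmem

lemma Arow (k : ℕ) (hk : 2 ≤ k) (α : ℝ) (π : Fin (k+3) → ℝ)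
    (h : (PRmat k α).mulVec π = π) (hs : ∑ v, π v = 1) :
    π ⟨k+2, by omega⟩ = (1-α)/((k:ℝ)+3)
      + ((α/3) * π ⟨k+1, by omega⟩ + α * π ⟨k+2, by omega⟩) := by
  conv_lhs => rw [PRrow k α π h hs ⟨k+2, by omega⟩]
  congr 1
  have key : ∀ j : Fin (k+3), (if PRadj k j.1 (k+2) then α/(PRdeg k j.1 : ℝ) else 0) * π j
      = (if j = (⟨k+1, by omega⟩ : Fin (k+3)) then (α/3) * π j else 0)
        + (if j = (⟨k+2, by omega⟩ : Fin (k+3)) then α * π j else 0) := by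
    intro j
    have hlt := j.isLt
    by_cases h1 : j.1 = k+1
    · have hadj : PRadj k j.1 (k+2) := by unfold PRadj; omega
      have hdeg : PRdeg k j.1 = 3 := by
        unfold PRdeg; rw [if_neg (by omega), if_neg (by omega)]
      rw [if_pos hadj, hdeg, if_pos (Fin.ext h1),
        if_neg (fun hh => by have := congrArg Fin.val hh; simp at this; omega)]
      push_cast; ring
    · by_cases h2 : j.1 = k+2
      · have hadj : PRadj k j.1 (k+2) := by unfold PRadj; omega
        have hdeg : PRdeg k j.1 = 1 := by
          unfold PRdeg; rw [if_neg (by omega), if_pos h2]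
        rw [if_pos hadj, hdeg,
          if_neg (fun hh => by have := congrArg Fin.val hh; simp at this; omega),
          if_pos (Fin.ext h2)]
        push_cast; ring
      · have hadj : ¬ PRadj k j.1 (k+2) := by unfold PRadj; omega
        rw [if_neg hadj, zero_mul,
          if_neg (fun hh => by have := congrArg Fin.val hh; simp at this; omega),
          if_neg (fun hh => by have := congrArg Fin.val hh; simp at this; omega), add_zero]
  rw [Finset.sum_congr rfl (fun j _ => key j), Finset.sum_add_distrib]
  simp only [Finset.sum_ite_eq', Finset.mem_univ, if_true]

lemma entry_le_one (k : ℕ) (π : Fin (k+3) → ℝ) (h0 : ∀ v, 0 ≤ π v)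
    (hs : ∑ v, π v = 1) (v : Fin (k+3)) : π v ≤ 1 := by
  rw [← hs]
  exact Finset.single_le_sum (fun i _ => h0 i) (Finset.mem_univ v)

lemma Bbound (k : ℕ) (hk : 2 ≤ k) (α : ℝ) (hα0 : 0 ≤ α) (hα1 : α ≤ 1)
    (π : Fin (k+3) → ℝ) (h0 : ∀ v, 0 ≤ π v)
    (h : (PRmat k α).mulVec π = π) (hs : ∑ v, π v = 1) :
    ∀ m, 2 ≤ m → ∀ hm : m ≤ k+1,
      π ⟨m, by omega⟩ ≤ (3/2) * ((1-α)/((k:ℝ)+3)) + (1/3:ℝ)^(m-1) := by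
  intro m h2
  induction m, h2 using Nat.le_induction with
  | base =>
    intro hm
    rw [Brec k α π h hs 2 le_rfl hm]
    have h1 : π ⟨1, by omega⟩ ≤ 1 := entry_le_one k π h0 hs _
    have h1' : 0 ≤ π ⟨1, by omega⟩ := h0 _
    have hc : 0 ≤ (1-α)/((k:ℝ)+3) := div_nonneg (by linarith) (by positivity)
    have e : (1/3:ℝ)^(2-1) = 1/3 := by norm_num
    rw [e]
    nlinarith
  | succ m hm2 ih =>
    intro hm
    rw [Brec k α π h hs (m+1) (by omega) hm]
    have key := ih (by omega)
    have hx : 0 ≤ π ⟨m, by omega⟩ := h0 _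
    have hq : (0:ℝ) ≤ (1/3:ℝ)^(m-1) := by positivity
    have hc : 0 ≤ (1-α)/((k:ℝ)+3) := div_nonneg (by linarith) (by positivity)
    have e1 : (⟨m+1-1, by omega⟩ : Fin (k+3)) = ⟨m, by omega⟩ := rfl
    have e2 : (1/3:ℝ)^(m+1-1) = (1/3:ℝ)^(m-1) * (1/3) := by
      rw [show m+1-1 = (m-1)+1 by omega, pow_succ]
    rw [e1, e2]
    nlinarith

lemma sq_le_three_pow : ∀ n : ℕ, 2 ≤ n → ((n:ℝ))^2 ≤ 3^n := by
  intro n hn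
  induction n, hn using Nat.le_induction with
  | base => norm_num
  | succ n hn ih =>
    have hn' : (2:ℝ) ≤ n := by exact_mod_cast hn
    have h3 : (0:ℝ) ≤ 3^n := by positivity
    push_cast
    have : ((n:ℝ)+1)^2 ≤ 3 * 3^n := by nlinarith [sq_nonneg ((n:ℝ)-1)]
    calc ((n:ℝ)+1)^2 ≤ 3 * 3^n := this
      _ = 3^(n+1) := by rw [pow_succ]; ring

lemma Abound (k : ℕ) (hk : 2 ≤ k) (π : Fin (k+3) → ℝ)
    (h : IsPageRank k (1 - 1/(k:ℝ)) π) :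
    π ⟨k+2, by omega⟩ ≤ 3/(k:ℝ) := by
  obtain ⟨h0, hs, hmul⟩ := h
  generalize hαdef : (1 - 1/(k:ℝ) : ℝ) = α at hmul
  have hk' : (2:ℝ) ≤ (k:ℝ) := by exact_mod_cast hk
  have h1k : 1/(k:ℝ) ≤ 1/2 := by
    apply div_le_div_of_nonneg_left <;> linarith
  have h1kp : (0:ℝ) < 1/(k:ℝ) := by positivity
  have hα0 : 0 ≤ α := by rw [← hαdef]; linarith
  have hα1 : α ≤ 1 := by rw [← hαdef]; linarith
  have hB := Bbound k hk α hα0 hα1 π h0 hmul hs (k+1) (by omega) le_rfl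
  have hA := Arow k hk α π hmul hs
  have hx0 : 0 ≤ π ⟨k+1, by omega⟩ := h0 _
  have hy0 : 0 ≤ π ⟨k+2, by omega⟩ := h0 _
  -- From the A row: (1-α) * π_A = c + (α/3) * π_{k+1}
  have hrow : (1/(k:ℝ)) * π ⟨k+2, by omega⟩
      = (1-α)/((k:ℝ)+3) + (α/3) * π ⟨k+1, by omega⟩ := by
    have h1α : 1 - α = 1/(k:ℝ) := by rw [← hαdef]; ring
    nlinarith [hA]
  have h1α : (1:ℝ) - α = 1/(k:ℝ) := by rw [← hαdef]; ring
  have hc : (1-α)/((k:ℝ)+3) = (1/(k:ℝ))/((k:ℝ)+3) := by rw [h1α]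
  have hpow : ((k:ℝ)) * (1/3:ℝ)^(k+1-1) ≤ 3/(k:ℝ) := by
    have e : (1/3:ℝ)^(k+1-1) = 1/3^k := by
      rw [show k+1-1 = k from rfl, div_pow, one_pow]
    rw [e, mul_one_div, div_le_div_iff₀ (by positivity) (by linarith)]
    have := sq_le_three_pow k hk
    nlinarith
  -- π_A = k * (c + (α/3) π_{k+1}) ≤ k*c + (k/3)*bound
  have hk0 : (0:ℝ) < k := by linarith
  have hyeq : π ⟨k+2, by omega⟩ = (k:ℝ) * ((1-α)/((k:ℝ)+3) + (α/3) * π ⟨k+1, by omega⟩) := by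
    rw [← hrow]
    field_simp
  have hkc : (k:ℝ) * ((1-α)/((k:ℝ)+3)) = 1/((k:ℝ)+3) := by
    rw [h1α]; field_simp
  have hax : (k:ℝ) * ((α/3) * π ⟨k+1, by omega⟩) ≤ (k:ℝ)/3 * π ⟨k+1, by omega⟩ := by
    nlinarith [mul_nonneg (mul_nonneg (le_of_lt hk0) hx0) (by linarith : (0:ℝ) ≤ 1 - α)]
  have hq := mul_le_mul_of_nonneg_left hB (by positivity : (0:ℝ) ≤ (k:ℝ)/3)
  have hfrac : 1/((k:ℝ)+3) ≤ 1/(k:ℝ) := by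
    apply one_div_le_one_div_of_le hk0; linarith
  have hyexp : π ⟨k+2, by omega⟩ = (k:ℝ) * ((1-α)/((k:ℝ)+3)) + (k:ℝ) * ((α/3) * π ⟨k+1, by omega⟩) := by
    rw [hyeq]; ring
  have h3k : 3/(k:ℝ) = 3 * (1/(k:ℝ)) := by ring
  nlinarith [hyexp, hax, hq, hkc, hpow, hfrac]


/-- If `π k` is the PageRank vector of `Γ(k)` for `α = 1 - 1/k` and `σ k` is the
PageRank vector of `Γ(k)` for `α = 1` (value `1` at `A`, `0` elsewhere), then
`‖σ(k) - π(k)‖_∞ → 1` as `k → ∞`. -/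
theorem pagerank_diff_sup_norm_tendsto (π : ∀ k : ℕ, Fin (k + 3) → ℝ)
    (hπ : ∀ k, 2 ≤ k → IsPageRank k (1 - 1 / (k : ℝ)) (π k))
    (σ : ∀ k : ℕ, Fin (k + 3) → ℝ)
    (hσ : ∀ k, σ k = fun v => if v.1 = k + 2 then (1 : ℝ) else 0) :
    Filter.Tendsto (fun k : ℕ => ⨆ v : Fin (k + 3), |σ k v - π k v|)
      Filter.atTop (nhds 1) := by
  have hg : Filter.Tendsto (fun k : ℕ => 1 - 3/(k:ℝ)) Filter.atTop (nhds 1) := by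
    simpa using Filter.Tendsto.const_sub (1:ℝ) (tendsto_const_div_atTop_nhds_zero_nat 3)
  have hh : Filter.Tendsto (fun _ : ℕ => (1:ℝ)) Filter.atTop (nhds 1) := tendsto_const_nhds
  refine tendsto_of_tendsto_of_tendsto_of_le_of_le' hg hh ?_ ?_
  · filter_upwards [Filter.eventually_ge_atTop 2] with k hk
    obtain ⟨h0, hs, hmul⟩ := hπ k hk
    have hbdd : BddAbove (Set.range fun v : Fin (k+3) => |σ k v - π k v|) :=
      (Set.finite_range _).bddAbove
    have hsup := le_ciSup hbdd (⟨k+2, by omega⟩ : Fin (k+3))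
    have hσA : σ k ⟨k+2, by omega⟩ = 1 := by simp [hσ k]
    have hA : π k ⟨k+2, by omega⟩ ≤ 3/(k:ℝ) := Abound k hk (π k) (hπ k hk)
    calc 1 - 3/(k:ℝ) ≤ 1 - π k ⟨k+2, by omega⟩ := by linarith
      _ ≤ |σ k ⟨k+2, by omega⟩ - π k ⟨k+2, by omega⟩| := by
          rw [hσA]; exact le_abs_self _
      _ ≤ _ := hsup
  · filter_upwards [Filter.eventually_ge_atTop 2] with k hk
    obtain ⟨h0, hs, hmul⟩ := hπ k hk
    apply ciSup_le
    intro v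
    have h1 : π k v ≤ 1 := entry_le_one k (π k) h0 hs v
    have h2 : 0 ≤ π k v := h0 v
    simp only [hσ k]
    by_cases hv : v.1 = k+2
    · rw [if_pos hv, abs_le]; constructor <;> linarith
    · rw [if_neg hv, abs_le]; constructor <;> linarith
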